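/- Middle Indexing pruning theorem (Theorem 1): let p, q : Fin d → ℝ, let 1 ≤ k ≤ d, fix a common index m with 0 ≤ m ≤ k-1, and define MI_min(u) = sorted(u)[m] and MI_max(u) = sorted(u)[m + (d-k)] (0-indexed order statistics of the coordinate values of u). If MI_max(p) < MI_min(q), then q does not k-dominate p. -/

import Mathlib

noncomputable def sortedCoords {d : ℕ} (u : Fin d → ℝ) : List ℝ :=
  (List.ofFn u).insertionSort (· ≤ ·)

def kDominates {d : ℕ} (k : ℕ) (a b : Fin d → ℝ) : Prop :=
  (∃ S' : Finset (Fin d), S'.card ≥ k ∧ ∀ j ∈ S', a j ≤ b j) ∧ ∃ j, a j < b j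

open Classical in
lemma card_filter_eq_countP_ofFn {d : ℕ} (u : Fin d → ℝ) (P : ℝ → Prop) :
    (Finset.univ.filter (fun j => P (u j))).card
      = (List.ofFn u).countP (fun x => decide (P x)) := by
  rw [List.ofFn_eq_map, List.countP_map, Finset.card_filter, Fin.sum_univ_def]
  induction (List.finRange d) with
  | nil => simp
  | cons a l ih =>
    rw [List.countP_cons, List.map_cons, List.sum_cons, ih]
    by_cases h : P (u a) <;> simp [h] <;> omega

lemma sortedCoords_length {d : ℕ} (u : Fin d → ℝ) : (sortedCoords u).length = d := by
  simp [sortedCoords]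

lemma sortedCoords_sorted {d : ℕ} (u : Fin d → ℝ) :
    (sortedCoords u).Pairwise (· ≤ ·) := List.pairwise_insertionSort _ _

open Classical in
lemma count_le_ge {d : ℕ} (u : Fin d → ℝ) (i : ℕ) (hi : i < d) :
    i + 1 ≤ (Finset.univ.filter
      (fun j => u j ≤ (sortedCoords u)[i]'(by rw [sortedCoords_length]; exact hi))).card := by
  set s := sortedCoords u with hs
  have hlen : s.length = d := sortedCoords_length u
  have hi' : i < s.length := by omega
  rw [card_filter_eq_countP_ofFn u (fun x => x ≤ s[i])]
  have hperm : s.Perm (List.ofFn u) := List.perm_insertionSort _ _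
  rw [← hperm.countP_eq]
  have htake : (s.take (i+1)).countP (fun x => decide (x ≤ s[i])) = (s.take (i+1)).length := by
    apply List.countP_eq_length.mpr
    intro a ha
    rw [List.mem_take_iff_getElem] at ha
    obtain ⟨j, hj, rfl⟩ := ha
    have hji : (⟨j, by omega⟩ : Fin s.length) ≤ ⟨i, hi'⟩ := by
      simp only [Fin.mk_le_mk]; omega
    have := (sortedCoords_sorted u).rel_get_of_le hji
    simpa using this
  have hsub := (List.take_sublist (i+1) s).countP_le (p := fun x => decide (x ≤ s[i]))
  rw [htake, List.length_take] at hsub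
  omega

open Classical in
lemma count_ge_ge {d : ℕ} (u : Fin d → ℝ) (i : ℕ) (hi : i < d) :
    d - i ≤ (Finset.univ.filter
      (fun j => (sortedCoords u)[i]'(by rw [sortedCoords_length]; exact hi) ≤ u j)).card := by
  set s := sortedCoords u with hs
  have hlen : s.length = d := sortedCoords_length u
  have hi' : i < s.length := by omega
  rw [card_filter_eq_countP_ofFn u (fun x => s[i] ≤ x)]
  have hperm : s.Perm (List.ofFn u) := List.perm_insertionSort _ _
  rw [← hperm.countP_eq]
  have hdrop : (s.drop i).countP (fun x => decide (s[i] ≤ x)) = (s.drop i).length := by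
    apply List.countP_eq_length.mpr
    intro a ha
    obtain ⟨j, hj, rfl⟩ := List.getElem_of_mem ha
    rw [List.getElem_drop]
    have hji : (⟨i, hi'⟩ : Fin s.length) ≤ ⟨i + j, by rw [List.length_drop] at hj; omega⟩ := by
      simp only [Fin.mk_le_mk]; omega
    have := (sortedCoords_sorted u).rel_get_of_le hji
    simpa using this
  have hsub := (List.drop_sublist i s).countP_le (p := fun x => decide (s[i] ≤ x))
  rw [hdrop, List.length_drop] at hsub
  omega

theorem middle_indexing_pruning {d k m : ℕ} (p q : Fin d → ℝ)
    (hk1 : 1 ≤ k) (hkd : k ≤ d) (hm : m ≤ k - 1)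
    (h : (sortedCoords p)[m + (d - k)]'(by
        simp only [sortedCoords, List.length_insertionSort, List.length_ofFn]; omega)
      < (sortedCoords q)[m]'(by
        simp only [sortedCoords, List.length_insertionSort, List.length_ofFn]; omega)) :
    ¬ kDominates k q p := by
  classical
  rintro ⟨⟨S, hScard, hSle⟩, -⟩
  set t : ℝ := (sortedCoords p)[m + (d - k)]'(by rw [sortedCoords_length]; omega) with ht
  set w : ℝ := (sortedCoords q)[m]'(by rw [sortedCoords_length]; omega) with hw
  set A : Finset (Fin d) := Finset.univ.filter (fun j => p j ≤ t) with hA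
  set B : Finset (Fin d) := Finset.univ.filter (fun j => w ≤ q j) with hB
  have hAcard : m + (d - k) + 1 ≤ A.card := count_le_ge p (m + (d - k)) (by omega)
  have hBcard : d - m ≤ B.card := count_ge_ge q m (by omega)
  have hdisj : ∀ j ∈ S, j ∉ A ∩ B := by
    intro j hj hjAB
    rw [Finset.mem_inter, hA, hB, Finset.mem_filter, Finset.mem_filter] at hjAB
    have h1 : q j ≤ p j := hSle j hj
    have h2 : p j ≤ t := hjAB.1.2
    have h3 : w ≤ q j := hjAB.2.2
    linarith
  have hsub : S ⊆ (A ∩ B)ᶜ := fun j hj => Finset.mem_compl.mpr (hdisj j hj)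
  have h1 : S.card ≤ ((A ∩ B)ᶜ).card := Finset.card_le_card hsub
  rw [Finset.card_compl] at h1
  have h2 : A.card + B.card ≤ (A ∩ B).card + d := by
    have := Finset.card_union_add_card_inter A B
    have hub : (A ∪ B).card ≤ d := by
      simpa using Finset.card_le_card (Finset.subset_univ (A ∪ B))
    omega
  have hAB : A.card ≤ d := by simpa using Finset.card_le_card (Finset.subset_univ A)
  simp only [Fintype.card_fin] at h1
  omega
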